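/- Let 0 → E → F → G → 0 be a short exact sequence of finite-dimensional vector spaces over a field of characteristic 0, with φ : F → G the surjection. Then Sym^n E is (canonically isomorphic to) the kernel of the map Sym^n F → Sym^{n-1} F ⊗ G sending f₁⋯fₙ to Σᵢ f₁⋯f̂ᵢ⋯fₙ ⊗ φ(fᵢ). -/

import Mathlib

open TensorProduct PiTensorProduct

variable (K : Type*) [Field K]

/-- The submodule of the `n`-th tensor power of `V` generated by differences of
pure tensors that differ by a permutation of the factors. -/
def symRelations (V : Type*) [AddCommGroup V] [Module K V] (n : ℕ) :
    Submodule K (⨂[K] (_ : Fin n), V) :=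
  Submodule.span K
    {x | ∃ (f : Fin n → V) (σ : Equiv.Perm (Fin n)),
      x = tprod K f - tprod K (f ∘ σ)}

/-- The `n`-th symmetric power of a vector space `V`, as the quotient of the
`n`-th tensor power by the permutation relations. -/
def SymPow (V : Type*) [AddCommGroup V] [Module K V] (n : ℕ) :=
  (⨂[K] (_ : Fin n), V) ⧸ symRelations K V n

noncomputable instance (V : Type*) [AddCommGroup V] [Module K V] (n : ℕ) :
    AddCommGroup (SymPow K V n) :=
  inferInstanceAs (AddCommGroup ((⨂[K] (_ : Fin n), V) ⧸ symRelations K V n))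

noncomputable instance (V : Type*) [AddCommGroup V] [Module K V] (n : ℕ) :
    Module K (SymPow K V n) :=
  inferInstanceAs (Module K ((⨂[K] (_ : Fin n), V) ⧸ symRelations K V n))

/-- The product `v₁ ⋯ vₙ` in the `n`-th symmetric power. -/
noncomputable def SymPow.mk (V : Type*) [AddCommGroup V] [Module K V] (n : ℕ) (f : Fin n → V) :
    SymPow K V n :=
  Submodule.Quotient.mk (tprod K f)

/-! ### Auxiliary material -/

section Aux

variable {V W : Type*} [AddCommGroup V] [Module K V] [AddCommGroup W] [Module K W] {n : ℕ}

lemma symPow_induction {P : SymPow K V n → Prop}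
    (hmk : ∀ (c : K) (f : Fin n → V), P (c • SymPow.mk K V n f))
    (hadd : ∀ x y, P x → P y → P (x + y)) (x : SymPow K V n) : P x := by
  obtain ⟨y, rfl⟩ := Submodule.Quotient.mk_surjective _ x
  induction y using PiTensorProduct.induction_on with
  | smul_tprod c f =>
      rw [Submodule.Quotient.mk_smul]
      exact hmk c f
  | add a b ha hb =>
      rw [Submodule.Quotient.mk_add]
      exact hadd _ _ ha hb

variable {K} in
lemma symPow_hom_ext {X : Type*} [AddCommGroup X] [Module K X]
    (f g : SymPow K V n →ₗ[K] X)
    (h : ∀ v, f (SymPow.mk K V n v) = g (SymPow.mk K V n v)) : f = g := by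
  ext x
  induction x using symPow_induction with
  | hmk c v => rw [map_smul, map_smul, h]
  | hadd a b ha hb => rw [map_add, map_add, ha, hb]

lemma SymPow.mk_comp_perm (f : Fin n → V) (σ : Equiv.Perm (Fin n)) :
    SymPow.mk K V n (f ∘ σ) = SymPow.mk K V n f := by
  rw [SymPow.mk, SymPow.mk]; refine (Submodule.Quotient.eq _).2 ?_
  have h : tprod K f - tprod K (f ∘ σ) ∈ symRelations K V n :=
    Submodule.subset_span ⟨f, σ, rfl⟩
  simpa using Submodule.neg_mem _ h

lemma SymPow.mk_update_zero (f : Fin n → V) (i : Fin n) :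
    SymPow.mk K V n (Function.update f i 0) = 0 := by
  have h : tprod K (Function.update f i 0) = 0 := MultilinearMap.map_update_zero _ f i
  rw [SymPow.mk, h, Submodule.Quotient.mk_zero]
  rfl

/-- Functoriality of symmetric powers. -/
noncomputable def SymPowMap (g : V →ₗ[K] W) (n : ℕ) : SymPow K V n →ₗ[K] SymPow K W n :=
  Submodule.mapQ _ _ (PiTensorProduct.map fun _ => g) (by
    rw [symRelations, Submodule.span_le]
    rintro x ⟨f, σ, rfl⟩
    simp only [SetLike.mem_coe, Submodule.mem_comap, map_sub, PiTensorProduct.map_tprod]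
    exact Submodule.subset_span ⟨g ∘ f, σ, rfl⟩)

lemma SymPowMap_mk (g : V →ₗ[K] W) (f : Fin n → V) :
    SymPowMap K g n (SymPow.mk K V n f) = SymPow.mk K W n (g ∘ f) := by
  rw [SymPowMap, SymPow.mk]
  erw [Submodule.mapQ_apply]
  rw [PiTensorProduct.map_tprod]
  rfl

theorem snoc_comp_perm {α : Type*} (f : Fin n → α) (v : α) (σ : Equiv.Perm (Fin n)) :
    Fin.snoc (f ∘ σ) v = (Fin.snoc f v : Fin (n+1) → α) ∘
      (finSuccEquivLast.symm.permCongr σ.optionCongr) := by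
  funext i
  induction i using Fin.lastCases with
  | last => simp
  | cast j => simp

theorem snoc_succAbove_eq {α : Type*} (f : Fin (n+1) → α) (v : α) (i : Fin (n+1)) :
    Fin.snoc (f ∘ i.succAbove) v = (Function.update f i v) ∘
      (finSuccEquivLast.trans (finSuccEquiv' i).symm) := by
  funext j
  induction j using Fin.lastCases with
  | last =>
      simp only [Function.comp_apply, Equiv.trans_apply]
      rw [show (finSuccEquivLast (Fin.last n) : Option (Fin n)) = none from finSuccEquivLast_last,
        finSuccEquiv'_symm_none, Fin.snoc_last, Function.update_self]
  | cast j =>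
      simp only [Function.comp_apply, Equiv.trans_apply]
      rw [show (finSuccEquivLast (Fin.castSucc j) : Option (Fin n)) = some j from
          finSuccEquivLast_castSucc j,
        finSuccEquiv'_symm_some, Fin.snoc_castSucc, Function.comp_apply,
        Function.update_of_ne (Fin.succAbove_ne i j)]

/-- The multilinear map `(f₁,…,fₙ) ↦ (g ↦ f₁⋯fₙ·s(g))`. -/
noncomputable def mulAux (s : W →ₗ[K] V) (n : ℕ) :
    MultilinearMap K (fun _ : Fin n => V) (W →ₗ[K] SymPow K V (n+1)) :=
  (LinearMap.lcomp K _ s).compMultilinearMap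
    (((symRelations K V (n+1)).mkQ.compMultilinearMap
      (tprod K (s := fun _ : Fin (n+1) => V))).curryRight)

lemma mulAux_apply (s : W →ₗ[K] V) (f : Fin n → V) (g : W) :
    mulAux K s n f g = SymPow.mk K V (n+1) (Fin.snoc f (s g)) := rfl

/-- Multiplication map `Sym^n V ⊗ W → Sym^{n+1} V`, `x ⊗ g ↦ x · s(g)`. -/
noncomputable def mulMap (s : W →ₗ[K] V) (n : ℕ) :
    (SymPow K V n ⊗[K] W) →ₗ[K] SymPow K V (n+1) :=
  TensorProduct.lift ((symRelations K V n).liftQ (PiTensorProduct.lift (mulAux K s n)) (by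
    rw [symRelations, Submodule.span_le]
    rintro x ⟨f, σ, rfl⟩
    simp only [SetLike.mem_coe, LinearMap.mem_ker, map_sub, PiTensorProduct.lift.tprod]
    rw [sub_eq_zero]
    ext g
    rw [mulAux_apply, mulAux_apply, snoc_comp_perm, SymPow.mk_comp_perm]))

lemma mulMap_tmul (s : W →ₗ[K] V) (f : Fin n → V) (g : W) :
    mulMap K s n (SymPow.mk K V n f ⊗ₜ[K] g) = SymPow.mk K V (n+1) (Fin.snoc f (s g)) := by
  rw [mulMap]; erw [TensorProduct.lift.tmul]; rw [SymPow.mk]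
  erw [Submodule.liftQ_apply]
  rw [PiTensorProduct.lift.tprod, mulAux_apply]

/-- Iterated product `(N - (m:K)) ⋯ (N - 1)`. -/
noncomputable def gOp {X : Type*} [AddCommGroup X] [Module K X] (N : X →ₗ[K] X) :
    ℕ → (X →ₗ[K] X)
  | 0 => LinearMap.id
  | (m+1) => (N - (((m+1 : ℕ) : K) • LinearMap.id)) ∘ₗ gOp N m

lemma gOp_eigen {X : Type*} [AddCommGroup X] [Module K X] (N : X →ₗ[K] X) {μ : K} {y : X}
    (h : N y = μ • y) (m : ℕ) :
    gOp K N m y = (∏ j ∈ Finset.range m, (μ - ((j+1 : ℕ) : K))) • y := by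
  induction m with
  | zero => simp [gOp]
  | succ m ih =>
      rw [gOp, LinearMap.comp_apply, ih, Finset.prod_range_succ]
      simp only [LinearMap.sub_apply, LinearMap.smul_apply, LinearMap.id_apply, map_smul, h,
        smul_smul, ← sub_smul]

end Aux

/-- Kernel description of symmetric powers of vector spaces (Lemma,
split/local case): for a short exact sequence `0 → E → F → G → 0` of
finite-dimensional vector spaces over a field of characteristic `0`, the image
of `Sym^n E` in `Sym^n F` is exactly the kernel of the contraction map
`Sym^n F → Sym^{n-1} F ⊗ G`, `f₁⋯fₙ ↦ Σᵢ f₁⋯f̂ᵢ⋯fₙ ⊗ φ(fᵢ)`, and `Sym^n E`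
maps isomorphically (injectively) onto this kernel. -/
theorem symPow_kernel_description [CharZero K]
    (E F G : Type*) [AddCommGroup E] [Module K E] [AddCommGroup F] [Module K F]
    [AddCommGroup G] [Module K G]
    [FiniteDimensional K E] [FiniteDimensional K F] [FiniteDimensional K G]
    (ψ : E →ₗ[K] F) (φ : F →ₗ[K] G)
    (hinj : Function.Injective ψ) (hsurj : Function.Surjective φ)
    (hexact : LinearMap.range ψ = LinearMap.ker φ)
    (n : ℕ)
    (Smap : SymPow K E (n + 1) →ₗ[K] SymPow K F (n + 1))
    (hSmap : ∀ f : Fin (n + 1) → E, Smap (SymPow.mk K E (n + 1) f) = SymPow.mk K F (n + 1) (ψ ∘ f))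
    (d : SymPow K F (n + 1) →ₗ[K] (SymPow K F n ⊗[K] G))
    (hd : ∀ f : Fin (n + 1) → F,
      d (SymPow.mk K F (n + 1) f) =
        ∑ i : Fin (n + 1), SymPow.mk K F n (f ∘ i.succAbove) ⊗ₜ[K] φ (f i)) :
    LinearMap.range Smap = LinearMap.ker d ∧ Function.Injective Smap := by
  classical
  obtain ⟨s, hs⟩ := φ.exists_rightInverse_of_surjective (LinearMap.range_eq_top.2 hsurj)
  obtain ⟨r, hr⟩ := ψ.exists_leftInverse_of_injective (LinearMap.ker_eq_bot.2 hinj)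
  have hφs : ∀ g, φ (s g) = g := fun g => LinearMap.congr_fun hs g
  have hrψ : ∀ e, r (ψ e) = e := fun e => LinearMap.congr_fun hr e
  set p : F →ₗ[K] F := s ∘ₗ φ with hp
  have hpval : ∀ v, p v = s (φ v) := fun v => rfl
  have hpp : ∀ v, p (p v) = p v := fun v => by simp [hpval, hφs]
  have hφψ : ∀ e, φ (ψ e) = 0 := fun e => by
    have h1 : ψ e ∈ LinearMap.ker φ := hexact ▸ LinearMap.mem_range_self ψ e
    simpa using h1
  -- injectivity
  have hLcomp : (SymPowMap K r (n+1)) ∘ₗ Smap = LinearMap.id := by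
    apply symPow_hom_ext
    intro f
    rw [LinearMap.comp_apply, LinearMap.id_apply, hSmap, SymPowMap_mk]
    congr 1
    funext j
    exact hrψ (f j)
  have hinj' : Function.Injective Smap := by
    intro a b hab
    have := congrArg (SymPowMap K r (n+1)) hab
    rwa [← LinearMap.comp_apply, ← LinearMap.comp_apply, hLcomp, LinearMap.id_apply,
      LinearMap.id_apply] at this
  -- the operator N
  set N : SymPow K F (n+1) →ₗ[K] SymPow K F (n+1) := (mulMap K s n) ∘ₗ d with hNdef
  have hN : ∀ f : Fin (n+1) → F, N (SymPow.mk K F (n+1) f)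
      = ∑ i : Fin (n+1), SymPow.mk K F (n+1) (Function.update f i (p (f i))) := by
    intro f
    rw [hNdef, LinearMap.comp_apply, hd, map_sum]
    refine Finset.sum_congr rfl fun i _ => ?_
    rw [mulMap_tmul, snoc_succAbove_eq, SymPow.mk_comp_perm]
    rfl
  -- eigenvalue computation on good generators
  have hNf : ∀ f : Fin (n+1) → F, (∀ j, p (f j) = f j ∨ p (f j) = 0) →
      N (SymPow.mk K F (n+1) f) =
        (((Finset.univ.filter (fun j => p (f j) = f j)).card : K)) • SymPow.mk K F (n+1) f := by
    intro f hQ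
    rw [hN]
    have h1 : ∀ i : Fin (n+1), SymPow.mk K F (n+1) (Function.update f i (p (f i)))
        = if p (f i) = f i then SymPow.mk K F (n+1) f else 0 := by
      intro i
      by_cases h : p (f i) = f i
      · rw [if_pos h, h, Function.update_eq_self]
      · rw [if_neg h]
        rcases hQ i with h' | h'
        · exact absurd h' h
        · rw [h']
          exact SymPow.mk_update_zero K f i
    rw [Finset.sum_congr rfl fun i _ => h1 i, Finset.sum_ite, Finset.sum_const,
      Finset.sum_const_zero, add_zero, ← Nat.cast_smul_eq_nsmul K]
  -- spanning by good generators
  have hspan : ∀ x : SymPow K F (n+1),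
      x ∈ Submodule.span K {x | ∃ f : Fin (n+1) → F,
        (∀ j, p (f j) = f j ∨ p (f j) = 0) ∧ x = SymPow.mk K F (n+1) f} := by
    intro x
    induction x using symPow_induction with
    | hadd a b ha hb => exact add_mem ha hb
    | hmk c f =>
        apply Submodule.smul_mem
        have hf : f = (fun j => f j - p (f j)) + (fun j => p (f j)) := by
          funext j
          simp
        have hexp : SymPow.mk K F (n+1) f
            = ∑ t : Finset (Fin (n+1)), SymPow.mk K F (n+1)
                (t.piecewise (fun j => f j - p (f j)) (fun j => p (f j))) := by
          have := ((symRelations K F (n+1)).mkQ.compMultilinearMap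
            (tprod K (s := fun _ : Fin (n+1) => F))).map_add_univ
            (fun j => f j - p (f j)) (fun j => p (f j))
          rw [show SymPow.mk K F (n+1) f
            = ((symRelations K F (n+1)).mkQ.compMultilinearMap
                (tprod K (s := fun _ : Fin (n+1) => F)))
              ((fun j => f j - p (f j)) + (fun j => p (f j))) by rw [← hf]; rfl, this]
          rfl
        rw [hexp]
        refine Submodule.sum_mem _ fun t _ => Submodule.subset_span ⟨_, fun j => ?_, rfl⟩
        by_cases hj : j ∈ t
        · right
          rw [Finset.piecewise_eq_of_mem _ _ _ hj]
          simp [hpval, hφs]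
        · left
          rw [Finset.piecewise_eq_of_notMem _ _ _ hj]
          exact hpp (f j)
  -- main claim: gOp (n+1) maps everything into the range of Smap
  have hPmem : ∀ x : SymPow K F (n+1), gOp K N (n+1) x ∈ LinearMap.range Smap := by
    intro x
    refine Submodule.span_induction ?_ ?_ ?_ ?_ (hspan x)
    · rintro y ⟨f, hQ, rfl⟩
      set k := (Finset.univ.filter (fun j => p (f j) = f j)).card with hk
      rw [gOp_eigen K N (hNf f hQ) (n+1)]
      rcases Nat.eq_zero_or_pos k with hk0 | hkpos
      · apply Submodule.smul_mem
        -- every f j is in the range of ψ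
        have hall : ∀ j, p (f j) = 0 := by
          intro j
          rcases hQ j with h' | h'
          · by_contra hne
            have : j ∈ Finset.univ.filter (fun j => p (f j) = f j) := by
              simp [h']
            rw [Finset.card_eq_zero.1 hk0] at this
            simp at this
          · exact h'
        have hmem : ∀ j, f j ∈ LinearMap.range ψ := by
          intro j
          rw [hexact, LinearMap.mem_ker]
          have : φ (s (φ (f j))) = φ (0 : F) := by rw [← hpval, hall j]
          rwa [hφs, map_zero] at this
        choose e he using fun j => hmem j
        have : SymPow.mk K F (n+1) f = Smap (SymPow.mk K E (n+1) e) := by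
          rw [hSmap]
          congr 1
          funext j
          exact (he j).symm
        rw [this]
        exact LinearMap.mem_range_self _ _
      · have hkle : k ≤ n + 1 := by
          rw [hk]
          calc (Finset.univ.filter (fun j => p (f j) = f j)).card
              ≤ Finset.univ.card := Finset.card_filter_le _ _
            _ = n + 1 := by simp
        have hzero : (∏ j ∈ Finset.range (n+1), ((k : K) - ((j+1 : ℕ) : K))) = 0 := by
          apply Finset.prod_eq_zero (i := k - 1)
          · simp only [Finset.mem_range]
            omega
          · have : k - 1 + 1 = k := Nat.succ_pred_eq_of_pos hkpos
            rw [this, sub_self]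
        rw [hzero, zero_smul]
        exact zero_mem _
    · simp only [map_zero]
      exact zero_mem _
    · intro a b _ _ ha hb
      rw [map_add]
      exact add_mem ha hb
    · intro c a _ ha
      rw [map_smul]
      exact Submodule.smul_mem _ _ ha
  constructor
  · apply le_antisymm
    · rintro x ⟨y, rfl⟩
      rw [LinearMap.mem_ker]
      induction y using symPow_induction with
      | hmk c f =>
          rw [map_smul, map_smul, hSmap, hd]
          have : ∀ i : Fin (n+1), SymPow.mk K F n ((ψ ∘ f) ∘ i.succAbove) ⊗ₜ[K] φ ((ψ ∘ f) i)
              = 0 := by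
            intro i
            rw [Function.comp_apply, hφψ, TensorProduct.tmul_zero]
          rw [Finset.sum_congr rfl fun i _ => this i, Finset.sum_const_zero, smul_zero]
      | hadd a b ha hb =>
          rw [map_add, map_add, ha, hb, add_zero]
    · intro x hx
      rw [LinearMap.mem_ker] at hx
      have hNx : N x = 0 := by rw [hNdef, LinearMap.comp_apply, hx, map_zero]
      have heig : N x = (0 : K) • x := by rw [hNx, zero_smul]
      have hgx := hPmem x
      rw [gOp_eigen K N heig (n+1)] at hgx
      set c := ∏ j ∈ Finset.range (n+1), ((0 : K) - ((j+1 : ℕ) : K)) with hc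
      have hcne : c ≠ 0 := by
        rw [hc]
        apply Finset.prod_ne_zero_iff.2
        intro j _
        simp only [zero_sub, neg_ne_zero]
        exact_mod_cast Nat.succ_ne_zero j
      have := Submodule.smul_mem (LinearMap.range Smap) c⁻¹ hgx
      rwa [smul_smul, inv_mul_cancel₀ hcne, one_smul] at this
  · exact hinj'
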